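/- For every r ≥ 1 and every r_p with 0 ≤ r_p ≤ r, every strategy that realizes the arbiter formula φ_{r,r_p} with respect to some bound requires at least r−1 memory states, i.e., it cannot be implemented by a memory structure with fewer than r−1 states. -/

import Mathlib

namespace PromptPaper

/-- Prompt-LTL formulas (in negation normal form) over atomic propositions of type `α`. -/
inductive Formula (α : Type) : Type
  | atom    : α → Formula α
  | natom   : α → Formula α
  | and     : Formula α → Formula α → Formula α
  | or      : Formula α → Formula α → Formula α
  | next    : Formula α → Formula α
  | untl    : Formula α → Formula α → Formula α
  | release : Formula α → Formula α → Formula α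
  | promptF : Formula α → Formula α

variable {α ι ο π : Type}

/-- Satisfaction `(w, n, k) ⊨ φ` (arguments: word `w`, bound `k`, position `n`, formula `φ`). -/
def Sat (w : ℕ → Set α) (k : ℕ) : ℕ → Formula α → Prop
  | n, .atom a => a ∈ w n
  | n, .natom a => a ∉ w n
  | n, .and φ ψ => Sat w k n φ ∧ Sat w k n ψ
  | n, .or φ ψ => Sat w k n φ ∨ Sat w k n ψ
  | n, .next φ => Sat w k (n + 1) φ
  | n, .untl φ ψ => ∃ j : ℕ, Sat w k (n + j) ψ ∧ ∀ m < j, Sat w k (n + m) φ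
  | n, .release φ ψ => ∀ j : ℕ, Sat w k (n + j) ψ ∨ ∃ m < j, Sat w k (n + m) φ
  | n, .promptF φ => ∃ j ≤ k, Sat w k (n + j) φ

/-- A formula is an LTL formula if it contains no prompt eventually operator. -/
def isLTL : Formula α → Prop
  | .atom _ => True
  | .natom _ => True
  | .and φ ψ => isLTL φ ∧ isLTL ψ
  | .or φ ψ => isLTL φ ∧ isLTL ψ
  | .next φ => isLTL φ
  | .untl φ ψ => isLTL φ ∧ isLTL ψ
  | .release φ ψ => isLTL φ ∧ isLTL ψ
  | .promptF _ => False

/-- The set of subformulas of a formula. -/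
def subf : Formula α → Set (Formula α)
  | .atom a => {Formula.atom a}
  | .natom a => {Formula.natom a}
  | .and φ ψ => insert (Formula.and φ ψ) (subf φ ∪ subf ψ)
  | .or φ ψ => insert (Formula.or φ ψ) (subf φ ∪ subf ψ)
  | .next φ => insert (Formula.next φ) (subf φ)
  | .untl φ ψ => insert (Formula.untl φ ψ) (subf φ ∪ subf ψ)
  | .release φ ψ => insert (Formula.release φ ψ) (subf φ ∪ subf ψ)
  | .promptF φ => insert (Formula.promptF φ) (subf φ)

/-- The size `|φ|` of a formula: the number of its subformulas. -/
noncomputable def size (φ : Formula α) : ℕ := (subf φ).ncard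

/-- Relativization `rel(φ)`; the fresh proposition `p ∉ P` is modelled by `none : Option α`. -/
def rel : Formula α → Formula (Option α)
  | .atom a => .atom (some a)
  | .natom a => .natom (some a)
  | .and φ ψ => .and (rel φ) (rel ψ)
  | .or φ ψ => .or (rel φ) (rel ψ)
  | .next φ => .next (rel φ)
  | .untl φ ψ => .untl (rel φ) (rel ψ)
  | .release φ ψ => .release (rel φ) (rel ψ)
  | .promptF φ =>
      .and
        (.or (.natom none) (.untl (.atom none) (.untl (.natom none) (rel φ))))
        (.or (.atom none) (.untl (.natom none) (.untl (.atom none) (rel φ))))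

/-- `w'` is a `p`-coloring of `w`: both agree on all propositions in `P`. -/
def IsColoring (w' : ℕ → Set (Option α)) (w : ℕ → Set α) : Prop :=
  ∀ n a, some a ∈ w' n ↔ a ∈ w n

/-- `n` is a change point of `w'`. -/
def ChangePoint (w' : ℕ → Set (Option α)) (n : ℕ) : Prop :=
  n = 0 ∨ ¬ ((none ∈ w' (n - 1)) ↔ (none ∈ w' n))

/-- `m` and `m'` are adjacent change points (the `p`-block between them has length `m' - m`). -/
def AdjacentCP (w' : ℕ → Set (Option α)) (m m' : ℕ) : Prop :=
  m < m' ∧ ChangePoint w' m ∧ ChangePoint w' m' ∧ ∀ l, m < l → l < m' → ¬ ChangePoint w' l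

/-- The truth value of `p` changes infinitely often in `w'`. -/
def InfCP (w' : ℕ → Set (Option α)) : Prop := ∀ n, ∃ m, n < m ∧ ChangePoint w' m

/-- `w'` is `k`-spaced. -/
def Spaced (k : ℕ) (w' : ℕ → Set (Option α)) : Prop :=
  InfCP w' ∧ ∀ m m', AdjacentCP w' m m' → k ≤ m' - m

/-- `w'` is `k`-bounded. -/
def Bounded (k : ℕ) (w' : ℕ → Set (Option α)) : Prop :=
  InfCP w' ∧ ∀ m m', AdjacentCP w' m m' → m' - m ≤ k

/-- The play consistent with strategy `σ` on input sequence `i`; `fi` and `fo` embed input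
and output propositions into the full set of propositions. -/
def play (fi : ι → π) (fo : ο → π) (i : ℕ → Set ι) (σ : List (Set ι) → Set ο) (n : ℕ) :
    Set π :=
  fi '' i n ∪ fo '' σ ((List.range (n + 1)).map i)

/-- `σ` realizes `φ` with respect to `k`: every consistent play satisfies `φ` w.r.t. `k`. -/
def Realizes (fi : ι → π) (fo : ο → π) (σ : List (Set ι) → Set ο) (k : ℕ)
    (φ : Formula π) : Prop :=
  ∀ i : ℕ → Set ι, Sat (play fi fo i σ) k 0 φ

/-- `upd*`, the extension of `upd` to finite input sequences. -/
def updStar {M : Type} (upd : M → Set ι → M) (m0 : M) (l : List (Set ι)) : M :=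
  l.foldl upd m0

/-- The memory structure `(M, m0, upd)` together with next-move function `nxt` implements `σ`. -/
def Implements {M : Type} (m0 : M) (upd : M → Set ι → M) (nxt : M → Set ι → Set ο)
    (σ : List (Set ι) → Set ο) : Prop :=
  ∀ (l : List (Set ι)) (i : Set ι), σ (l ++ [i]) = nxt (updStar upd m0 l) i

/-- `σ` is a finite-state strategy of size at most `n`. -/
def SizeAtMost (σ : List (Set ι) → Set ο) (n : ℕ) : Prop :=
  ∃ (M : Type) (_ : Fintype M) (m0 : M) (upd : M → Set ι → M) (nxt : M → Set ι → Set ο),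
    Fintype.card M ≤ n ∧ Implements m0 upd nxt σ

/-- The set of realizable parameters `R(φ)` over the partition `(ι, ο)`. -/
def RealParams (φ : Formula (ι ⊕ ο)) : Set (ℕ × ℕ) :=
  {nk : ℕ × ℕ | ∃ σ : List (Set ι) → Set ο,
    SizeAtMost σ nk.1 ∧ Realizes Sum.inl Sum.inr σ nk.2 φ}

/-- `(n, k)` is a Pareto position of `φ` (conditions on `n - 1` resp. `k - 1` are vacuously
true if `n = 0` resp. `k = 0`). -/
def Pareto (φ : Formula (ι ⊕ ο)) (n k : ℕ) : Prop :=
  (n, k) ∈ RealParams φ ∧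
    (n = 0 ∨ (n - 1, k) ∉ RealParams φ) ∧
    (k = 0 ∨ (n, k - 1) ∉ RealParams φ)

/-- `true` as a formula (relative to a fixed atomic proposition `a`). -/
def ltrue (a : α) : Formula α := .or (.atom a) (.natom a)

/-- `false` as a formula (relative to a fixed atomic proposition `a`). -/
def lfalse (a : α) : Formula α := .and (.atom a) (.natom a)

/-- `F φ = true U φ`. -/
def ev (a : α) (φ : Formula α) : Formula α := .untl (ltrue a) φ

/-- `G φ = false R φ`. -/
def glob (a : α) (φ : Formula α) : Formula α := .release (lfalse a) φ

/-- Conjunction of a list of formulas. -/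
def conj (a : α) (l : List (Formula α)) : Formula α := l.foldr Formula.and (ltrue a)

/-- The arbiter formula `φ_{r, rp}`, with `I = {q_1, …, q_r}` modelled as `Sum.inl`-side and
`O = {p_1, …, p_r}` as `Sum.inr`-side of `Fin r ⊕ Fin r`. -/
def arbiter (r rp : ℕ) (hr : 0 < r) : Formula (Fin r ⊕ Fin r) :=
  let q : Fin r → Fin r ⊕ Fin r := Sum.inl
  let pr : Fin r → Fin r ⊕ Fin r := Sum.inr
  let a0 : Fin r ⊕ Fin r := Sum.inl ⟨0, hr⟩
  Formula.and
    (conj a0 (((List.finRange r).filter (fun i => decide (i.val < rp))).map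
      (fun i => glob a0 (Formula.or (.natom (q i)) (.promptF (.atom (pr i)))))))
    (Formula.and
      (conj a0 (((List.finRange r).filter (fun i => decide (rp ≤ i.val))).map
        (fun i => glob a0 (Formula.or (.natom (q i)) (ev a0 (.atom (pr i)))))))
      (conj a0 ((List.finRange r).flatMap (fun i =>
        ((List.finRange r).filter (fun j => decide (i ≠ j))).map
          (fun j => glob a0 (Formula.or (.natom (pr i)) (.natom (pr j))))))))


lemma sat_ltrue (w : ℕ → Set α) (k n : ℕ) (a : α) : Sat w k n (ltrue a) := by
  simp only [ltrue, Sat]; exact em _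

lemma sat_conj (w : ℕ → Set α) (k n : ℕ) (a : α) (l : List (Formula α)) :
    Sat w k n (conj a l) ↔ ∀ φ ∈ l, Sat w k n φ := by
  induction l with
  | nil => simpa [conj] using sat_ltrue w k n a
  | cons φ l ih =>
    have : Sat w k n (conj a (φ :: l)) ↔ Sat w k n φ ∧ Sat w k n (conj a l) := Iff.rfl
    rw [this, ih]
    simp

lemma sat_glob (w : ℕ → Set α) (k n : ℕ) (a : α) (φ : Formula α) :
    Sat w k n (glob a φ) ↔ ∀ j, Sat w k (n + j) φ := by
  constructor
  · intro h j
    rcases h j with h' | ⟨m, _, hm⟩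
    · exact h'
    · exact absurd hm.1 hm.2
  · intro h j
    exact Or.inl (h j)

/-- every strategy realizing the arbiter formula `φ_{r, rp}` with respect to
some bound requires at least `r - 1` memory states. -/
theorem arbiter_memory_lower_bound (r rp : ℕ) (hr : 0 < r) (hrp : rp ≤ r)
    (σ : List (Set (Fin r)) → Set (Fin r)) (k : ℕ)
    (hreal : Realizes Sum.inl Sum.inr σ k (arbiter r rp hr))
    (M : Type) (instM : Fintype M) (m0 : M) (upd : M → Set (Fin r) → M)
    (nxt : M → Set (Fin r) → Set (Fin r)) (himpl : Implements m0 upd nxt σ) :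
    r - 1 ≤ Fintype.card M := by
  classical
  -- the input: all requests at step 0, nothing afterwards
  set i : ℕ → Set (Fin r) := fun n => if n = 0 then Set.univ else ∅ with hi
  set out : ℕ → Set (Fin r) := fun n => σ ((List.range (n + 1)).map i) with hout
  set w := play (Sum.inl : Fin r → Fin r ⊕ Fin r) Sum.inr i σ with hw
  have hmemr : ∀ (n : ℕ) (q : Fin r), (Sum.inr q ∈ w n) ↔ q ∈ out n := by
    intro n q; simp [hw, play, hout]
  have hmeml : ∀ q : Fin r, Sum.inl q ∈ w 0 := by
    intro q; simp [hw, play, hi]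
  have H : Sat w k 0 (arbiter r rp hr) := hreal i
  simp only [arbiter] at H
  obtain ⟨h1, h2, h3⟩ := H
  rw [sat_conj] at h1 h2 h3
  -- mutual exclusion
  have hB : ∀ (n : ℕ) (q q' : Fin r), q ≠ q' → q ∈ out n → q' ∈ out n → False := by
    intro n q q' hne hq hq'
    have hmem : glob (Sum.inl ⟨0, hr⟩ : Fin r ⊕ Fin r)
        (Formula.or (.natom (Sum.inr q)) (.natom (Sum.inr q'))) ∈
        (List.finRange r).flatMap (fun i' =>
          ((List.finRange r).filter (fun j => decide (i' ≠ j))).map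
            (fun j => glob (Sum.inl ⟨0, hr⟩)
              (Formula.or (.natom (Sum.inr i')) (.natom (Sum.inr j))))) := by
      rw [List.mem_flatMap]
      exact ⟨q, List.mem_finRange q, by
        rw [List.mem_map]
        exact ⟨q', by simp [List.mem_filter, hne], rfl⟩⟩
    have := (sat_glob w k 0 _ _).mp (h3 _ hmem) n
    simp only [Nat.zero_add] at this
    rcases this with h | h
    · exact h ((hmemr n q).mpr hq)
    · exact h ((hmemr n q').mpr hq')
  -- every request is eventually granted
  have hA : ∀ q : Fin r, ∃ n, q ∈ out n := by
    intro q
    by_cases hq : q.val < rp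
    · have hmem : glob (Sum.inl ⟨0, hr⟩ : Fin r ⊕ Fin r)
          (Formula.or (.natom (Sum.inl q)) (.promptF (.atom (Sum.inr q)))) ∈
          ((List.finRange r).filter (fun i' => decide (i'.val < rp))).map
            (fun i' => glob (Sum.inl ⟨0, hr⟩)
              (Formula.or (.natom (Sum.inl i')) (.promptF (.atom (Sum.inr i'))))) := by
        rw [List.mem_map]
        exact ⟨q, by simp [List.mem_filter, hq], rfl⟩
      have h := (sat_glob w k 0 _ _).mp (h1 _ hmem) 0
      rcases h with h | ⟨j, _, hj⟩
      · exact absurd (hmeml q) h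
      · simp only [Nat.zero_add] at hj
        exact ⟨j, (hmemr j q).mp hj⟩
    · have hmem : glob (Sum.inl ⟨0, hr⟩ : Fin r ⊕ Fin r)
          (Formula.or (.natom (Sum.inl q)) (ev (Sum.inl ⟨0, hr⟩) (.atom (Sum.inr q)))) ∈
          ((List.finRange r).filter (fun i' => decide (rp ≤ i'.val))).map
            (fun i' => glob (Sum.inl ⟨0, hr⟩)
              (Formula.or (.natom (Sum.inl i')) (ev (Sum.inl ⟨0, hr⟩) (.atom (Sum.inr i'))))) := by
        rw [List.mem_map]
        exact ⟨q, by simp [List.mem_filter, Nat.le_of_not_lt hq], rfl⟩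
      have h := (sat_glob w k 0 _ _).mp (h2 _ hmem) 0
      rcases h with h | ⟨j, hj, _⟩
      · exact absurd (hmeml q) h
      · simp only [Nat.zero_add] at hj
        exact ⟨j, (hmemr j q).mp hj⟩
  -- outputs at positive steps depend only on the memory state
  set s : ℕ → M := fun n => updStar upd m0 ((List.range n).map i) with hs
  have hdet : ∀ n, 0 < n → out n = nxt (s n) ∅ := by
    intro n hn
    have : (List.range (n + 1)).map i = (List.range n).map i ++ [i n] := by
      rw [List.range_succ, List.map_append]; rfl
    rw [hout]
    simp only
    rw [this, himpl]
    have : i n = ∅ := by simp [hi, Nat.pos_iff_ne_zero.mp hn]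
    rw [this]
  -- the injection Fin r → Option M
  have hout0 : out 0 = nxt (s 0) Set.univ := by
    have : (List.range 1).map i = ([] : List (Set (Fin r))) ++ [i 0] := by
      simp [List.range_succ]
    rw [hout]; simp only
    rw [this, himpl]
    simp [hi, hs, updStar]
  choose nq hnq using hA
  set f : Fin r → Option M := fun q => if nq q = 0 then none else some (s (nq q)) with hf
  have hinj : Function.Injective f := by
    intro q q' heq
    by_contra hne
    simp only [hf] at heq
    by_cases h0 : nq q = 0
    · by_cases h0' : nq q' = 0
      · exact hB 0 q q' hne (h0 ▸ hnq q) (h0' ▸ hnq q')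
      · rw [if_pos h0, if_neg h0'] at heq; cases heq
    · by_cases h0' : nq q' = 0
      · rw [if_neg h0, if_pos h0'] at heq; cases heq
      · rw [if_neg h0, if_neg h0'] at heq
        have hss : s (nq q) = s (nq q') := Option.some_injective _ heq
        have h1 : out (nq q) = out (nq q') := by
          rw [hdet _ (Nat.pos_of_ne_zero h0), hdet _ (Nat.pos_of_ne_zero h0'), hss]
        exact hB (nq q') q q' hne (h1 ▸ hnq q) (hnq q')
  have := Fintype.card_le_of_injective f hinj
  simp only [Fintype.card_fin, Fintype.card_option] at this
  omega

end PromptPaper
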